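/- arXiv:2004.08493 — 4 statements merged into one kernel-verified Lean document; each statement's English description precedes it below -/
import Mathlib

section
/- Let n be a 2-step nilpotent Lie algebra with inner product, z its center, v = z^⊥, and S : n → n a symmetric linear map. Then ⟨Y, [SY, Y]⟩ = 0 for all Y ∈ n if and only if (i) [SX, Y] = [X, SY] for all X,Y ∈ v, and (ii) for each X ∈ v the map Z ↦ P_z([X, S Z]) restricted to z is skew-symmetric on z, i.e. ⟨[X, SZ₁], Z₂⟩ + ⟨[X, SZ₂], Z₁⟩ = 0 for all Z₁,Z₂ ∈ z. -/
/-- Membership in the center of a Lie ring. -/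
def IsCentral {n : Type*} [LieRing n] (Z : n) : Prop := ∀ W : n, ⁅Z, W⁆ = 0

/-- Membership in `v = zᗮ`, the orthogonal complement of the center with
respect to the inner product `ip`. -/
def InCenterPerp {n : Type*} [LieRing n] [LieAlgebra ℝ n]
    (ip : n →ₗ[ℝ] n →ₗ[ℝ] ℝ) (X : n) : Prop :=
  ∀ Z : n, IsCentral Z → ip X Z = 0

/-- In a 2-step nilpotent metric Lie algebra `n = v ⊕ z`, a
symmetric map `S` satisfies `⟨Y,[SY,Y]⟩ = 0` for all `Y` iff
(i) `[SX,Y] = [X,SY]` on `v` and (ii) `Z ↦ [X,SZ]` is skew-symmetric on the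
center `z`, for every `X ∈ v`. -/
theorem two_step_quadratic_first_integral_iff
    {n : Type*} [LieRing n] [LieAlgebra ℝ n] [FiniteDimensional ℝ n]
    (h2 : ∀ u v w : n, ⁅u, ⁅v, w⁆⁆ = 0)
    (ip : n →ₗ[ℝ] n →ₗ[ℝ] ℝ)
    (ip_symm : ∀ x y : n, ip x y = ip y x)
    (ip_pos : ∀ x : n, x ≠ 0 → 0 < ip x x)
    (S : n →ₗ[ℝ] n)
    (hSsym : ∀ x y : n, ip (S x) y = ip x (S y)) :
    (∀ Y : n, ip Y ⁅S Y, Y⁆ = 0) ↔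
      ((∀ X Y : n, InCenterPerp ip X → InCenterPerp ip Y →
          ⁅S X, Y⁆ = ⁅X, S Y⁆) ∧
       (∀ X : n, InCenterPerp ip X →
          ∀ Z₁ Z₂ : n, IsCentral Z₁ → IsCentral Z₂ →
            ip ⁅X, S Z₁⁆ Z₂ + ip ⁅X, S Z₂⁆ Z₁ = 0)) := by
  -- brackets are central
  have hbc : ∀ u v : n, IsCentral ⁅u, v⁆ := by
    intro u v W
    rw [← lie_skew ⁅u, v⁆ W, h2 W u v, neg_zero]
  -- positive definiteness: ip x x = 0 → x = 0
  have hdef : ∀ x : n, ip x x = 0 → x = 0 := by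
    intro x hx
    by_contra hx0
    exact absurd hx (ne_of_gt (ip_pos x hx0))
  constructor
  · intro hY
    -- full polarization
    have polar : ∀ a b c : n,
        ip a ⁅S b, c⁆ + ip a ⁅S c, b⁆ + ip b ⁅S a, c⁆ + ip b ⁅S c, a⁆
          + ip c ⁅S a, b⁆ + ip c ⁅S b, a⁆ = 0 := by
      intro a b c
      have h1 := hY (a + b + c)
      have h2' := hY (a + b)
      have h3 := hY (a + c)
      have h4 := hY (b + c)
      have h5 := hY a
      have h6 := hY b
      have h7 := hY c
      simp only [map_add, add_lie, lie_add, LinearMap.add_apply] at h1 h2' h3 h4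
      linarith
    constructor
    · intro X Y hX hYv
      set D : n := ⁅S X, Y⁆ - ⁅X, S Y⁆ with hD
      have hDc : IsCentral D := by
        intro W
        simp [hD, sub_lie, hbc (S X) Y W, hbc X (S Y) W]
      have hp := polar D X Y
      have e1 : ⁅S X, D⁆ = 0 := by rw [← lie_skew (S X) D, hDc (S X), neg_zero]
      have e2 : ⁅S Y, D⁆ = 0 := by rw [← lie_skew (S Y) D, hDc (S Y), neg_zero]
      have e3 : ip X ⁅S D, Y⁆ = 0 := hX _ (hbc _ _)
      have e4 : ip Y ⁅S D, X⁆ = 0 := hYv _ (hbc _ _)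
      have e5 : ⁅S Y, X⁆ = -⁅X, S Y⁆ := (lie_skew (S Y) X).symm
      rw [e1, e2, e5, e3, e4] at hp
      simp only [map_zero, map_neg] at hp
      have hDD : ip D D = 0 := by
        have : ip D D = ip D ⁅S X, Y⁆ - ip D ⁅X, S Y⁆ := by
          rw [hD]; simp [map_sub]
        linarith
      have : D = 0 := hdef D hDD
      rwa [hD, sub_eq_zero] at this
    · intro X hX Z₁ Z₂ hZ₁ hZ₂
      have hp := polar X Z₁ Z₂
      have e1 : ⁅S Z₁, Z₂⁆ = 0 := by rw [← lie_skew (S Z₁) Z₂, hZ₂ (S Z₁), neg_zero]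
      have e2 : ⁅S Z₂, Z₁⁆ = 0 := by rw [← lie_skew (S Z₂) Z₁, hZ₁ (S Z₂), neg_zero]
      have e3 : ⁅S X, Z₂⁆ = 0 := by rw [← lie_skew (S X) Z₂, hZ₂ (S X), neg_zero]
      have e4 : ⁅S X, Z₁⁆ = 0 := by rw [← lie_skew (S X) Z₁, hZ₁ (S X), neg_zero]
      have e5 : ⁅S Z₂, X⁆ = -⁅X, S Z₂⁆ := (lie_skew (S Z₂) X).symm
      have e6 : ⁅S Z₁, X⁆ = -⁅X, S Z₁⁆ := (lie_skew (S Z₁) X).symm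
      rw [e1, e2, e3, e4, e5, e6] at hp
      simp only [map_zero, map_neg] at hp
      rw [ip_symm ⁅X, S Z₁⁆ Z₂, ip_symm ⁅X, S Z₂⁆ Z₁]
      linarith
  · rintro ⟨hi, hii⟩ Y
    -- the center as a submodule
    let C : Submodule ℝ n :=
      { carrier := {Z | IsCentral Z}
        add_mem' := fun ha hb W => by rw [add_lie, ha W, hb W, add_zero]
        zero_mem' := fun W => zero_lie W
        smul_mem' := fun c x hx W => by rw [smul_lie, hx W, smul_zero] }
    let B : LinearMap.BilinForm ℝ n := ip
    have hrefl : B.IsRefl := fun x y h => by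
      rw [show B y x = ip y x from rfl, ip_symm]; exact h
    have hrest : (B.restrict C).Nondegenerate := by
      refine ⟨?_, ?_⟩ <;>
      intro x hx <;>
      have := hx x <;>
      simp only [LinearMap.BilinForm.restrict_apply] at this <;>
      exact Subtype.ext (hdef _ this)
    have hcompl := LinearMap.BilinForm.isCompl_orthogonal_of_restrict_nondegenerate
      (B := B) (W := C) hrefl hrest
    -- decompose Y = Z + X with Z central, X ∈ perp
    obtain ⟨Z, hZmem, X, hXmem, hYZX⟩ :
        ∃ Z ∈ C, ∃ X ∈ B.orthogonal C, Y = Z + X := by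
      have : Y ∈ C ⊔ B.orthogonal C := by rw [hcompl.sup_eq_top]; trivial
      obtain ⟨z, hz, x, hx, h⟩ := Submodule.mem_sup.mp this
      exact ⟨z, hz, x, hx, h.symm⟩
    have hZ : IsCentral Z := hZmem
    have hX : InCenterPerp ip X := by
      intro W hW
      have := hXmem W hW
      rw [ip_symm]
      exact this
    -- [SX, X] = 0
    have hSXX : ⁅S X, X⁆ = 0 := by
      have h := hi X X hX hX
      have h' : ⁅S X, X⁆ = -⁅S X, X⁆ := h.trans (lie_skew X (S X)).symm
      have : (2 : ℝ) • ⁅S X, X⁆ = 0 := by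
        rw [two_smul]; linear_combination (norm := abel) h'
      simpa using this
    have hbr1 : ⁅S X, Z⁆ = 0 := by rw [← lie_skew (S X) Z, hZ (S X), neg_zero]
    have hbr2 : ⁅S Z, Z⁆ = 0 := by rw [← lie_skew (S Z) Z, hZ (S Z), neg_zero]
    have hii' : ip ⁅X, S Z⁆ Z = 0 := by
      have := hii X hX Z Z hZ hZ
      linarith
    have hXperp : ip X ⁅S Z, X⁆ = 0 := hX _ (hbc _ _)
    have hZterm : ip Z ⁅S Z, X⁆ = 0 := by
      rw [show ⁅S Z, X⁆ = -⁅X, S Z⁆ from (lie_skew (S Z) X).symm, map_neg,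
        ip_symm, hii', neg_zero]
    rw [hYZX]
    simp only [map_add, add_lie, lie_add, LinearMap.add_apply, hSXX, hbr1, hbr2,
      map_zero, zero_add, add_zero]
    rw [hXperp, hZterm, add_zero]
end

section
/- In the free 3-step nilpotent Lie algebra n_{2,3} in two generators with orthonormal basis e1,...,e5 and brackets [e1,e2]=e3, [e1,e3]=e4, [e2,e3]=e5, every skew-symmetric derivation D satisfies: D e1 = α e2, D e2 = -α e1, D e3 = 0, D e4 = α e5, D e5 = -α e4 for some α ∈ ℝ. -/
/-- In the free 3-step nilpotent Lie algebra `n₂,₃` in two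
generators, with orthonormal basis `e₁,…,e₅` and brackets `[e₁,e₂]=e₃`,
`[e₁,e₃]=e₄`, `[e₂,e₃]=e₅` (all other basis brackets zero), every
skew-symmetric derivation `D` has the form `De₁ = αe₂`, `De₂ = -αe₁`,
`De₃ = 0`, `De₄ = αe₅`, `De₅ = -αe₄` for some `α ∈ ℝ`. -/
theorem skew_derivations_of_free_three_step
    {n : Type*} [LieRing n] [LieAlgebra ℝ n]
    (ip : n →ₗ[ℝ] n →ₗ[ℝ] ℝ)
    (ip_symm : ∀ x y : n, ip x y = ip y x)
    (ip_pos : ∀ x : n, x ≠ 0 → 0 < ip x x)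
    (e : Fin 5 → n)
    (horth : ∀ i j : Fin 5, ip (e i) (e j) = if i = j then 1 else 0)
    (hspan : Submodule.span ℝ (Set.range e) = ⊤)
    (h12 : ⁅e 0, e 1⁆ = e 2) (h13 : ⁅e 0, e 2⁆ = e 3) (h23 : ⁅e 1, e 2⁆ = e 4)
    (h14 : ⁅e 0, e 3⁆ = 0) (h15 : ⁅e 0, e 4⁆ = 0)
    (h24 : ⁅e 1, e 3⁆ = 0) (h25 : ⁅e 1, e 4⁆ = 0)
    (h34 : ⁅e 2, e 3⁆ = 0) (h35 : ⁅e 2, e 4⁆ = 0) (h45 : ⁅e 3, e 4⁆ = 0)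
    (D : n →ₗ[ℝ] n)
    (hder : ∀ X Y : n, D ⁅X, Y⁆ = ⁅D X, Y⁆ + ⁅X, D Y⁆)
    (hskew : ∀ X Y : n, ip (D X) Y + ip X (D Y) = 0) :
    ∃ α : ℝ, D (e 0) = α • e 1 ∧ D (e 1) = -α • e 0 ∧ D (e 2) = 0 ∧
      D (e 3) = α • e 4 ∧ D (e 4) = -α • e 3 := by
  have expand : ∀ x : n, x = ∑ i, ip (e i) x • e i := by
    intro x
    have hiy : ∀ i, ip (e i) (x - ∑ j, ip (e j) x • e j) = 0 := by
      intro i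
      rw [map_sub, map_sum]
      simp [map_smul, horth, smul_eq_mul, Finset.sum_ite_eq']
    have hzy : ∀ z : n, ip z (x - ∑ j, ip (e j) x • e j) = 0 := by
      intro z
      have hz : z ∈ Submodule.span ℝ (Set.range e) := by rw [hspan]; trivial
      induction hz using Submodule.span_induction with
      | mem w hw => obtain ⟨i, rfl⟩ := hw; exact hiy i
      | zero => simp
      | add u v _ _ hu hv => rw [map_add, LinearMap.add_apply, hu, hv, add_zero]
      | smul c u _ hu => rw [map_smul, LinearMap.smul_apply, hu, smul_zero]
    by_contra h
    have hne : x - ∑ j, ip (e j) x • e j ≠ 0 := sub_ne_zero.mpr h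
    have hp := ip_pos _ hne
    rw [hzy] at hp
    exact lt_irrefl 0 hp
  -- notation for matrix entries
  set a : Fin 5 → Fin 5 → ℝ := fun i j => ip (e i) (D (e j)) with ha
  have hskew' : ∀ i j, a j i = - a i j := by
    intro i j
    have h := hskew (e i) (e j)
    rw [ha]
    simp only
    rw [ip_symm (e j) (D (e i))]
    linarith
  have hdiag : ∀ i, a i i = 0 := by
    intro i; have := hskew' i i; linarith
  -- full bracket table
  have h21 : ⁅e 1, e 0⁆ = -e 2 := by rw [← lie_skew, h12]
  have h31 : ⁅e 2, e 0⁆ = -e 3 := by rw [← lie_skew, h13]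
  have h32 : ⁅e 2, e 1⁆ = -e 4 := by rw [← lie_skew, h23]
  have h41 : ⁅e 3, e 0⁆ = 0 := by rw [← lie_skew, h14, neg_zero]
  have h51 : ⁅e 4, e 0⁆ = 0 := by rw [← lie_skew, h15, neg_zero]
  have h42 : ⁅e 3, e 1⁆ = 0 := by rw [← lie_skew, h24, neg_zero]
  have h52 : ⁅e 4, e 1⁆ = 0 := by rw [← lie_skew, h25, neg_zero]
  have h43 : ⁅e 3, e 2⁆ = 0 := by rw [← lie_skew, h34, neg_zero]
  have h53 : ⁅e 4, e 2⁆ = 0 := by rw [← lie_skew, h35, neg_zero]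
  have h54 : ⁅e 4, e 3⁆ = 0 := by rw [← lie_skew, h45, neg_zero]
  have hD0 := expand (D (e 0))
  have hD1 := expand (D (e 1))
  have hD2 := expand (D (e 2))
  -- vector identities from the derivation property
  have R2 : D (e 2) = (a 0 0 + a 1 1) • e 2 + a 2 1 • e 3 + (- a 2 0) • e 4 := by
    have h := hder (e 0) (e 1); rw [h12] at h; rw [h]
    rw [hD0, hD1]
    simp only [Fin.sum_univ_five, add_lie, lie_add, smul_lie, lie_smul, ← ha,
      h12, h13, h14, h15, h32, h42, h52, lie_self, smul_zero, smul_neg]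
    module
  have R3 : D (e 3) = a 1 2 • e 2 + (a 0 0 + a 2 2) • e 3 + a 1 0 • e 4 := by
    have h := hder (e 0) (e 2); rw [h13] at h; rw [h]
    rw [hD0, hD2]
    simp only [Fin.sum_univ_five, add_lie, lie_add, smul_lie, lie_smul, ← ha,
      h12, h13, h14, h15, h23, h43, h53, lie_self, smul_zero, smul_neg]
    module
  have R4 : D (e 4) = (- a 0 2) • e 2 + a 0 1 • e 3 + (a 1 1 + a 2 2) • e 4 := by
    have h := hder (e 1) (e 2); rw [h23] at h; rw [h]
    rw [hD1, hD2]
    simp only [Fin.sum_univ_five, add_lie, lie_add, smul_lie, lie_smul, ← ha,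
      h13, h21, h23, h24, h25, h43, h53, lie_self, smul_zero, smul_neg]
    module
  have hD3 := expand (D (e 3))
  have hD4 := expand (D (e 4))
  have Z03 : (0:n) = a 1 3 • e 2 + a 2 3 • e 3 := by
    have h := hder (e 0) (e 3); rw [h14, map_zero] at h
    rw [h, hD0, hD3]
    simp only [Fin.sum_univ_five, add_lie, lie_add, smul_lie, lie_smul, ← ha,
      h12, h13, h14, h15, h24, h34, h54, lie_self, smul_zero, smul_neg]
    module
  have Z13 : (0:n) = (- a 0 3) • e 2 + a 2 3 • e 4 := by
    have h := hder (e 1) (e 3); rw [h24, map_zero] at h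
    rw [h, hD1, hD3]
    simp only [Fin.sum_univ_five, add_lie, lie_add, smul_lie, lie_smul, ← ha,
      h14, h21, h23, h24, h25, h34, h54, lie_self, smul_zero, smul_neg]
    module
  have Z04 : (0:n) = a 1 4 • e 2 + a 2 4 • e 3 := by
    have h := hder (e 0) (e 4); rw [h15, map_zero] at h
    rw [h, hD0, hD4]
    simp only [Fin.sum_univ_five, add_lie, lie_add, smul_lie, lie_smul, ← ha,
      h12, h13, h14, h15, h25, h35, h45, lie_self, smul_zero, smul_neg]
    module
  have Z14 : (0:n) = (- a 0 4) • e 2 + a 2 4 • e 4 := by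
    have h := hder (e 1) (e 4); rw [h25, map_zero] at h
    rw [h, hD1, hD4]
    simp only [Fin.sum_univ_five, add_lie, lie_add, smul_lie, lie_smul, ← ha,
      h15, h21, h23, h24, h25, h35, h45, lie_self, smul_zero, smul_neg]
    module
  -- extract scalar coefficients
  have c02 : a 0 2 = 0 := by
    have h := congrArg (ip (e 0)) R2
    rw [ha]; simp only
    simpa [map_add, map_smul, horth, smul_eq_mul] using h
  have c12 : a 1 2 = 0 := by
    have h := congrArg (ip (e 1)) R2
    rw [ha]; simp only
    simpa [map_add, map_smul, horth, smul_eq_mul] using h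
  have c32 : a 3 2 = a 2 1 := by
    have h := congrArg (ip (e 3)) R2
    rw [ha]; simp only
    simpa [map_add, map_smul, horth, smul_eq_mul] using h
  have c42 : a 4 2 = - a 2 0 := by
    have h := congrArg (ip (e 4)) R2
    rw [ha]; simp only
    simpa [map_add, map_smul, horth, smul_eq_mul] using h
  have c03 : a 0 3 = 0 := by
    have h := congrArg (ip (e 2)) Z13
    simpa [map_add, map_smul, horth, smul_eq_mul, ha] using h.symm
  have c13 : a 1 3 = 0 := by
    have h := congrArg (ip (e 2)) Z03
    simpa [map_add, map_smul, horth, smul_eq_mul, ha] using h.symm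
  have c23 : a 2 3 = 0 := by
    have h := congrArg (ip (e 3)) Z03
    simpa [map_add, map_smul, horth, smul_eq_mul, ha] using h.symm
  have c43 : a 4 3 = a 1 0 := by
    have h := congrArg (ip (e 4)) R3
    rw [ha]; simp only
    simpa [map_add, map_smul, horth, smul_eq_mul] using h
  have c04 : a 0 4 = 0 := by
    have h := congrArg (ip (e 2)) Z14
    simpa [map_add, map_smul, horth, smul_eq_mul, ha] using h.symm
  have c14 : a 1 4 = 0 := by
    have h := congrArg (ip (e 2)) Z04
    simpa [map_add, map_smul, horth, smul_eq_mul, ha] using h.symm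
  have c24 : a 2 4 = 0 := by
    have h := congrArg (ip (e 3)) Z04
    simpa [map_add, map_smul, horth, smul_eq_mul, ha] using h.symm
  have c34 : a 3 4 = a 0 1 := by
    have h := congrArg (ip (e 3)) R4
    rw [ha]; simp only
    simpa [map_add, map_smul, horth, smul_eq_mul] using h
  simp only [ha] at hskew' hdiag c02 c12 c32 c42 c03 c13 c23 c43 c04 c14 c24 c34
  refine ⟨(ip (e 1)) (D (e 0)), ?_, ?_, ?_, ?_, ?_⟩
  · conv_lhs => rw [hD0]
    simp only [Fin.sum_univ_five]
    rw [hdiag 0, hskew' 0 2, c02, hskew' 0 3, c03, hskew' 0 4, c04]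
    module
  · conv_lhs => rw [hD1]
    simp only [Fin.sum_univ_five]
    rw [hdiag 1, hskew' 1 2, c12, hskew' 1 3, c13, hskew' 1 4, c14, hskew' 1 0]
    module
  · conv_lhs => rw [hD2]
    simp only [Fin.sum_univ_five]
    rw [hdiag 2, c02, c12, c32, c42]
    rw [hskew' 1 2, c12, hskew' 0 2, c02]
    module
  · conv_lhs => rw [hD3]
    simp only [Fin.sum_univ_five]
    rw [hdiag 3, c03, c13, c23, c43]
    module
  · conv_lhs => rw [hD4]
    simp only [Fin.sum_univ_five]
    rw [hdiag 4, c04, c14, c24, c34, hskew' 1 0]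
    module
end

section
/- In the 5-dimensional 3-step nilpotent Lie algebra n_1 with orthonormal basis e1,...,e5 and brackets [e1,e2]=e3, [e1,e3]=e5, [e2,e4]=e5, every skew-symmetric derivation D satisfies D e1 = α e2, D e2 = -α e1 + β e4, D e3 = 0, D e4 = -β e2, D e5 = 0 for some α, β ∈ ℝ. -/
/-- In the 5-dimensional 3-step nilpotent Lie algebra `n₁` with
orthonormal basis `e₁,…,e₅` and brackets `[e₁,e₂]=e₃`, `[e₁,e₃]=e₅`,
`[e₂,e₄]=e₅` (all other basis brackets zero), every skew-symmetric derivation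
`D` satisfies `De₁ = αe₂`, `De₂ = -αe₁ + βe₄`, `De₃ = 0`, `De₄ = -βe₂`,
`De₅ = 0` for some `α, β ∈ ℝ`. -/
theorem skew_derivations_of_n1
    {n : Type*} [LieRing n] [LieAlgebra ℝ n]
    (ip : n →ₗ[ℝ] n →ₗ[ℝ] ℝ)
    (ip_symm : ∀ x y : n, ip x y = ip y x)
    (ip_pos : ∀ x : n, x ≠ 0 → 0 < ip x x)
    (e : Fin 5 → n)
    (horth : ∀ i j : Fin 5, ip (e i) (e j) = if i = j then 1 else 0)
    (hspan : Submodule.span ℝ (Set.range e) = ⊤)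
    (h12 : ⁅e 0, e 1⁆ = e 2) (h13 : ⁅e 0, e 2⁆ = e 4) (h24 : ⁅e 1, e 3⁆ = e 4)
    (h14 : ⁅e 0, e 3⁆ = 0) (h15 : ⁅e 0, e 4⁆ = 0)
    (h23 : ⁅e 1, e 2⁆ = 0) (h25 : ⁅e 1, e 4⁆ = 0)
    (h34 : ⁅e 2, e 3⁆ = 0) (h35 : ⁅e 2, e 4⁆ = 0) (h45 : ⁅e 3, e 4⁆ = 0)
    (D : n →ₗ[ℝ] n)
    (hder : ∀ X Y : n, D ⁅X, Y⁆ = ⁅D X, Y⁆ + ⁅X, D Y⁆)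
    (hskew : ∀ X Y : n, ip (D X) Y + ip X (D Y) = 0) :
    ∃ α β : ℝ, D (e 0) = α • e 1 ∧ D (e 1) = -α • e 0 + β • e 3 ∧
      D (e 2) = 0 ∧ D (e 3) = -β • e 1 ∧ D (e 4) = 0 := by
  classical
  -- reversed bracket relations
  have h21 : ⁅e 1, e 0⁆ = -e 2 := by rw [← lie_skew, h12]
  have h31 : ⁅e 2, e 0⁆ = -e 4 := by rw [← lie_skew, h13]
  have h42 : ⁅e 3, e 1⁆ = -e 4 := by rw [← lie_skew, h24]
  have h41 : ⁅e 3, e 0⁆ = 0 := by rw [← lie_skew, h14, neg_zero]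
  have h51 : ⁅e 4, e 0⁆ = 0 := by rw [← lie_skew, h15, neg_zero]
  have h32 : ⁅e 2, e 1⁆ = 0 := by rw [← lie_skew, h23, neg_zero]
  have h52 : ⁅e 4, e 1⁆ = 0 := by rw [← lie_skew, h25, neg_zero]
  have h43 : ⁅e 3, e 2⁆ = 0 := by rw [← lie_skew, h34, neg_zero]
  have h53 : ⁅e 4, e 2⁆ = 0 := by rw [← lie_skew, h35, neg_zero]
  have h54 : ⁅e 4, e 3⁆ = 0 := by rw [← lie_skew, h45, neg_zero]
  -- skew symmetry of the coefficient matrix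
  have s : ∀ i j : Fin 5, ip (D (e i)) (e j) = - ip (D (e j)) (e i) := by
    intro i j
    have h := hskew (e i) (e j)
    rw [ip_symm (e i) (D (e j))] at h
    linarith
  -- a vector orthogonal to all basis vectors is zero
  have hzero : ∀ x : n, (∀ j, ip x (e j) = 0) → x = 0 := by
    intro x hx
    by_contra hne
    have hpos := ip_pos x hne
    have hx' : x ∈ Submodule.span ℝ (Set.range e) := hspan ▸ Submodule.mem_top
    obtain ⟨c, hc⟩ := (Submodule.mem_span_range_iff_exists_fun ℝ).1 hx'
    have hz : ip x x = 0 := by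
      nth_rewrite 2 [← hc]
      rw [map_sum]
      refine Finset.sum_eq_zero fun i _ => ?_
      rw [map_smul, hx i, smul_zero]
    exact hpos.ne' hz
  -- expansion in the orthonormal basis
  have hrepr : ∀ x : n, x = ∑ j, ip x (e j) • e j := by
    intro x
    have h0 : x - ∑ j, ip x (e j) • e j = 0 := by
      apply hzero
      intro k
      simp only [map_sub, map_sum, map_smul, LinearMap.sub_apply, LinearMap.sum_apply,
        LinearMap.smul_apply, smul_eq_mul]
      rw [Finset.sum_eq_single k]
      · rw [horth, if_pos rfl]; ring
      · intro j _ hj; rw [horth, if_neg hj, mul_zero]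
      · intro h; exact absurd (Finset.mem_univ k) h
    exact sub_eq_zero.1 h0
  have hD : ∀ i : Fin 5, D (e i) = ip (D (e i)) (e 0) • e 0 + ip (D (e i)) (e 1) • e 1 +
      ip (D (e i)) (e 2) • e 2 + ip (D (e i)) (e 3) • e 3 + ip (D (e i)) (e 4) • e 4 := by
    intro i
    conv_lhs => rw [hrepr (D (e i))]
    rw [Fin.sum_univ_five]
  -- derivation equations
  have EA := hder (e 0) (e 3)
  rw [h14, map_zero, hD 0, hD 3] at EA
  simp only [add_lie, lie_add, smul_lie, lie_smul, lie_self, h12, h13, h14, h15, h23, h24,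
    h25, h34, h35, h45, h21, h31, h41, h42, h51, h32, h52, h43, h53, h54, smul_zero, smul_neg,
    add_zero, zero_add] at EA
  have gA := congrArg (fun z => ip z (e 2)) EA
  simp [horth] at gA
  -- gA : ip (D (e 3)) (e 1) = 0 (roughly)
  have EB := hder (e 0) (e 4)
  rw [h15, map_zero, hD 0, hD 4] at EB
  simp only [add_lie, lie_add, smul_lie, lie_smul, lie_self, h12, h13, h14, h15, h23, h24,
    h25, h34, h35, h45, h21, h31, h41, h42, h51, h32, h52, h43, h53, h54, smul_zero, smul_neg,
    add_zero, zero_add] at EB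
  have gB1 := congrArg (fun z => ip z (e 2)) EB
  have gB2 := congrArg (fun z => ip z (e 4)) EB
  simp [horth] at gB1 gB2
  have EC := hder (e 1) (e 4)
  rw [h25, map_zero, hD 1, hD 4] at EC
  simp only [add_lie, lie_add, smul_lie, lie_smul, lie_self, h12, h13, h14, h15, h23, h24,
    h25, h34, h35, h45, h21, h31, h41, h42, h51, h32, h52, h43, h53, h54, smul_zero, smul_neg,
    add_zero, zero_add] at EC
  have gC1 := congrArg (fun z => ip z (e 2)) EC
  have gC2 := congrArg (fun z => ip z (e 4)) EC
  simp [horth] at gC1 gC2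
  have EE := hder (e 1) (e 2)
  rw [h23, map_zero, hD 1, hD 2] at EE
  simp only [add_lie, lie_add, smul_lie, lie_smul, lie_self, h12, h13, h14, h15, h23, h24,
    h25, h34, h35, h45, h21, h31, h41, h42, h51, h32, h52, h43, h53, h54, smul_zero, smul_neg,
    add_zero, zero_add] at EE
  have gE1 := congrArg (fun z => ip z (e 2)) EE
  have gE2 := congrArg (fun z => ip z (e 4)) EE
  simp [horth] at gE1 gE2
  have EF := hder (e 2) (e 3)
  rw [h34, map_zero, hD 2, hD 3] at EF
  simp only [add_lie, lie_add, smul_lie, lie_smul, lie_self, h12, h13, h14, h15, h23, h24,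
    h25, h34, h35, h45, h21, h31, h41, h42, h51, h32, h52, h43, h53, h54, smul_zero, smul_neg,
    add_zero, zero_add] at EF
  have gF := congrArg (fun z => ip z (e 4)) EF
  simp [horth] at gF
  have EH := hder (e 0) (e 1)
  rw [h12, hD 0, hD 1] at EH
  simp only [add_lie, lie_add, smul_lie, lie_smul, lie_self, h12, h13, h14, h15, h23, h24,
    h25, h34, h35, h45, h21, h31, h41, h42, h51, h32, h52, h43, h53, h54, smul_zero, smul_neg,
    add_zero, zero_add] at EH
  have gH1 := congrArg (fun z => ip z (e 1)) EH
  have gH3 := congrArg (fun z => ip z (e 3)) EH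
  simp [horth] at gH1 gH3
  -- now derive all coefficients are zero
  have sd : ∀ i : Fin 5, ip (D (e i)) (e i) = 0 := by
    intro i; have := s i i; linarith
  -- all off-diagonal coefficients vanish
  have c10 : ip (D (e 1)) (e 0) = 0 := by linarith [gE2, gH3]
  have c01 : ip (D (e 0)) (e 1) = 0 := by linarith [s 0 1, c10]
  have c20 : ip (D (e 2)) (e 0) = 0 := gE1
  have c02 : ip (D (e 0)) (e 2) = 0 := by linarith [s 0 2, c20]
  have c21 : ip (D (e 2)) (e 1) = 0 := gH1
  have c12 : ip (D (e 1)) (e 2) = 0 := by linarith [s 1 2, c21]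
  have c30 : ip (D (e 3)) (e 0) = 0 := by linarith [gF, gH1]
  have c03 : ip (D (e 0)) (e 3) = 0 := by linarith [s 0 3, c30]
  have c40 : ip (D (e 4)) (e 0) = 0 := gC1
  have c04 : ip (D (e 0)) (e 4) = 0 := by linarith [s 0 4, c40]
  have c31 : ip (D (e 3)) (e 1) = 0 := gA.symm
  have c13 : ip (D (e 1)) (e 3) = 0 := by linarith [s 1 3, c31]
  have c41 : ip (D (e 4)) (e 1) = 0 := gB1.symm
  have c14 : ip (D (e 1)) (e 4) = 0 := by linarith [s 1 4, c41]
  have c23 : ip (D (e 2)) (e 3) = 0 := gH3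
  have c32 : ip (D (e 3)) (e 2) = 0 := by linarith [s 3 2, c23]
  have c42 : ip (D (e 4)) (e 2) = 0 := gB2.symm
  have c24 : ip (D (e 2)) (e 4) = 0 := by linarith [s 2 4, c42]
  have c43 : ip (D (e 4)) (e 3) = 0 := gC2.symm
  have c34 : ip (D (e 3)) (e 4) = 0 := by linarith [s 3 4, c43]
  refine ⟨0, 0, ?_, ?_, ?_, ?_, ?_⟩
  · rw [hD 0, sd 0, c01, c02, c03, c04]; simp
  · rw [hD 1, sd 1, c10, c12, c13, c14]; simp
  · rw [hD 2, sd 2, c20, c21, c23, c24]; simp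
  · rw [hD 3, sd 3, c30, c31, c32, c34]; simp
  · rw [hD 4, sd 4, c40, c41, c42, c43]; simp
end

section
/- Let n be a 3-step nilpotent Lie algebra, D a derivation of n, and W, X ∈ n. Define Ad_{-W}(X) = X - [W,X] + (1/2)[W,[W,X]]. Then D(Ad_{-W}(X)) + [DW, Ad_{-W}(X)] + (1/2)[[DW,W], Ad_{-W}(X)] = Ad_{-W}(DX). -/
/-- For a derivation `D` of a 3-step nilpotent Lie algebra and
`Ad_{-W}(X) = X - [W,X] + ½[W,[W,X]]`, one has
`D(Ad_{-W}X) + [DW, Ad_{-W}X] + ½[[DW,W], Ad_{-W}X] = Ad_{-W}(DX)`. -/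
theorem derivation_Ad_identity_three_step
    {n : Type*} [LieRing n] [LieAlgebra ℝ n]
    (h3 : ∀ X U V W : n, ⁅X, ⁅U, ⁅V, W⁆⁆⁆ = 0)
    (D : n →ₗ[ℝ] n)
    (hder : ∀ X Y : n, D ⁅X, Y⁆ = ⁅D X, Y⁆ + ⁅X, D Y⁆)
    (W X : n) :
    D (X - ⁅W, X⁆ + (1/2 : ℝ) • ⁅W, ⁅W, X⁆⁆)
      + ⁅D W, X - ⁅W, X⁆ + (1/2 : ℝ) • ⁅W, ⁅W, X⁆⁆⁆
      + (1/2 : ℝ) • ⁅⁅D W, W⁆, X - ⁅W, X⁆ + (1/2 : ℝ) • ⁅W, ⁅W, X⁆⁆⁆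
      = D X - ⁅W, D X⁆ + (1/2 : ℝ) • ⁅W, ⁅W, D X⁆⁆ := by
  simp only [map_add, map_sub, map_smul, hder, lie_add, add_lie, lie_sub, sub_lie,
    lie_smul, smul_lie, lie_lie, h3, lie_zero, zero_lie, smul_zero, sub_zero, zero_sub,
    add_zero, zero_add, neg_zero]
  module
end
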